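/- Let M, N ⊆ ℝⁿ be convex polytopes with nonempty interior and φ : U → V a C¹-diffeomorphism between relatively open subsets U ⊆ M, V ⊆ N. Then for each x ∈ U, φ'(x)(E(x)) = F(φ(x)), where E(x) = span(M(x) − x) and F(y) = span(N(y) − y) for the smallest faces M(x), N(y) containing x resp. y. In particular dim E(x) = dim F(φ(x)). -/

import Mathlib

open Set

/-- A convex polytope: the convex hull of a finite set. -/
def IsPolytope (n : ℕ) (M : Set (Fin n → ℝ)) : Prop :=
  ∃ S : Finset (Fin n → ℝ), M = convexHull ℝ (S : Set (Fin n → ℝ))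

/-- A face of `M`: a convex extreme subset of `M`. -/
def IsFaceOf (n : ℕ) (M F : Set (Fin n → ℝ)) : Prop :=
  Convex ℝ F ∧ IsExtreme ℝ M F

/-- The smallest face of `M` containing `x`: the intersection of all faces containing `x`. -/
def smallestFace (n : ℕ) (M : Set (Fin n → ℝ)) (x : Fin n → ℝ) : Set (Fin n → ℝ) :=
  ⋂₀ {F | IsFaceOf n M F ∧ x ∈ F}

/-- `E(x) := span_ℝ (M(x) - x)`, where `M(x)` is the smallest face of `M` containing `x`. -/
def spanAt (n : ℕ) (M : Set (Fin n → ℝ)) (x : Fin n → ℝ) : Submodule ℝ (Fin n → ℝ) :=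
  Submodule.span ℝ ((fun y => y - x) '' smallestFace n M x)

/-- dimension of a set: the dimension of its affine hull. -/
noncomputable def setDim (n : ℕ) (F : Set (Fin n → ℝ)) : ℕ :=
  Module.finrank ℝ (vectorSpan ℝ F)

/-- The stratum `∂_i(M)` of points of index `i`, i.e. whose smallest containing face
has dimension `n - i`. -/
def stratum (n : ℕ) (M : Set (Fin n → ℝ)) (i : ℕ) : Set (Fin n → ℝ) :=
  {x ∈ M | setDim n (smallestFace n M x) = n - i}

/-! ### Auxiliary material -/

section Cone

variable {E : Type*} [NormedAddCommGroup E] [NormedSpace ℝ E]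

/-- The cone of nonnegative combinations of a finite set of vectors. -/
def coneK (T : Finset E) : Set E :=
  {w | ∃ c : E → ℝ, (∀ z ∈ T, 0 ≤ c z) ∧ ∑ z ∈ T, c z • z = w}

lemma coneK_mono {T' T : Finset E} (h : T' ⊆ T) : coneK T' ⊆ coneK T := by
  classical
  rintro w ⟨c, hc, rfl⟩
  refine ⟨fun z => if z ∈ T' then c z else 0, fun z _ => ?_, ?_⟩
  · dsimp only
    split_ifs with h'
    · exact hc z h'
    · exact le_refl 0
  · have h1 : ∑ z ∈ T, (if z ∈ T' then c z else 0) • z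
        = ∑ z ∈ T', (if z ∈ T' then c z else 0) • z :=
      (Finset.sum_subset h (fun x _ hnx => by simp [hnx])).symm
  
    rw [h1]
    exact Finset.sum_congr rfl fun x hx => by simp [hx]

lemma coneK_erase [DecidableEq E] {T : Finset E} (g : E → ℝ) (hg0 : ∑ z ∈ T, g z • z = 0)
    {i : E} (hi : i ∈ T) (hgi : 0 < g i) {w : E} (hw : w ∈ coneK T) :
    ∃ z ∈ T, w ∈ coneK (T.erase z) := by
  classical
  obtain ⟨c, hc, hsum⟩ := hw
  obtain ⟨z₀, hz₀, hmin⟩ := Finset.exists_min_image (T.filter fun z => 0 < g z)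
    (fun z => c z / g z) ⟨i, Finset.mem_filter.2 ⟨hi, hgi⟩⟩
  rw [Finset.mem_filter] at hz₀
  obtain ⟨hz₀T, hgz₀⟩ := hz₀
  set lam := c z₀ / g z₀ with hlam
  have hlam0 : 0 ≤ lam := div_nonneg (hc _ hz₀T) hgz₀.le
  refine ⟨z₀, hz₀T, fun z => c z - lam * g z, fun z hz => ?_, ?_⟩
  · dsimp only
    have hzT := Finset.mem_of_mem_erase hz
    rcases le_or_gt (g z) 0 with h | h
    · have := hc z hzT
      nlinarith
    · have hle := hmin z (Finset.mem_filter.2 ⟨hzT, h⟩)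
      have hle' : lam * g z ≤ c z := (le_div_iff₀ h).1 hle
      linarith
  · have hz0 : c z₀ - lam * g z₀ = 0 := by
      rw [hlam, div_mul_cancel₀ _ hgz₀.ne', sub_self]
    dsimp only
    rw [Finset.sum_erase _ (by rw [hz0, zero_smul])]
    have hsplit : ∑ z ∈ T, (c z - lam * g z) • z
        = ∑ z ∈ T, c z • z - lam • ∑ z ∈ T, g z • z := by
      rw [Finset.smul_sum, ← Finset.sum_sub_distrib]
      exact Finset.sum_congr rfl fun x _ => by rw [sub_smul, smul_smul]
    rw [hsplit, hg0, smul_zero, sub_zero, hsum]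

lemma coneK_carath (T : Finset E) :
    ∀ w ∈ coneK T, ∃ T' : Finset E, T' ⊆ T ∧
      LinearIndependent ℝ (fun z : {x // x ∈ T'} => (z : E)) ∧ w ∈ coneK T' := by
  classical
  induction T using Finset.strongInductionOn with
  | _ T ih =>
    intro w hw
    by_cases hind : LinearIndependent ℝ (fun z : {x // x ∈ T} => (z : E))
    · exact ⟨T, subset_rfl, hind, hw⟩
    · obtain ⟨g, hgsum, i, hgi⟩ := Fintype.not_linearIndependent_iff.1 hind
      set G : E → ℝ := fun x => if h : x ∈ T then g ⟨x, h⟩ else 0 with hG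
      have hGsum : ∑ z ∈ T, G z • z = 0 := by
        rw [← Finset.sum_attach T (fun z => G z • z)]
        rw [← hgsum, Finset.univ_eq_attach]
        refine Finset.sum_congr rfl fun z _ => ?_
        simp only [hG, dif_pos z.2]
      have key : ∃ z ∈ T, w ∈ coneK (T.erase z) := by
        rcases hgi.lt_or_gt with hneg | hpos
        · have hGsum' : ∑ z ∈ T, (-G) z • z = 0 := by
            simp only [Pi.neg_apply, neg_smul, Finset.sum_neg_distrib, hGsum, neg_zero]
          refine coneK_erase (-G) hGsum' i.2 ?_ hw
          simp only [Pi.neg_apply, hG, dif_pos i.2]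
          linarith
        · refine coneK_erase G hGsum i.2 ?_ hw
          simp only [hG, dif_pos i.2]
          exact hpos
      obtain ⟨z, hz, hw'⟩ := key
      obtain ⟨T', hsub, hli, hmem⟩ := ih (T.erase z) (Finset.erase_ssubset hz) w hw'
      exact ⟨T', hsub.trans (Finset.erase_subset _ _), hli, hmem⟩

lemma subtype_sum_eq (T : Finset E) (c : E → ℝ) :
    ∑ z : {x // x ∈ T}, c ↑z • (↑z : E) = ∑ z ∈ T, c z • z := by
  rw [Finset.univ_eq_attach, Finset.sum_attach T (fun z => c z • z)]

lemma isClosed_coneK_of_li [FiniteDimensional ℝ E] (T : Finset E)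
    (h : LinearIndependent ℝ (fun z : {x // x ∈ T} => (z : E))) : IsClosed (coneK T) := by
  classical
  let f : ({x // x ∈ T} → ℝ) →ₗ[ℝ] E :=
    { toFun := fun c => ∑ z : {x // x ∈ T}, c z • (z : E)
      map_add' := fun a b => by
        simp only [Pi.add_apply, add_smul, Finset.sum_add_distrib]
      map_smul' := fun r a => by
        simp only [Pi.smul_apply, smul_eq_mul, ← smul_smul, RingHom.id_apply, Finset.smul_sum] }
  have hker : LinearMap.ker f = ⊥ := by
    rw [LinearMap.ker_eq_bot']
    intro m hm
    funext j
    exact Fintype.linearIndependent_iff.1 h m hm j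
  have hemb := LinearMap.isClosedEmbedding_of_injective hker
  have horth : IsClosed {c : {x // x ∈ T} → ℝ | ∀ z, 0 ≤ c z} := by
    have hiff : {c : {x // x ∈ T} → ℝ | ∀ z, 0 ≤ c z} = ⋂ z, {c | 0 ≤ c z} := by
      ext c; simp [Set.mem_iInter]
    rw [hiff]
    exact isClosed_iInter fun z => isClosed_le continuous_const (continuous_apply z)
  have himg : coneK T = f '' {c | ∀ z, 0 ≤ c z} := by
    ext w
    constructor
    · rintro ⟨c, hc, rfl⟩
      refine ⟨fun z => c z, fun z => hc z z.2, ?_⟩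
      exact subtype_sum_eq T c
    · rintro ⟨c', hc', rfl⟩
      refine ⟨fun x => if h : x ∈ T then c' ⟨x, h⟩ else 0,
        fun z hz => by dsimp only; rw [dif_pos hz]; exact hc' _, ?_⟩
      rw [← subtype_sum_eq T (fun x => if h : x ∈ T then c' ⟨x, h⟩ else 0)]
      refine Finset.sum_congr rfl fun z _ => ?_
      rw [dif_pos z.2]
  rw [himg]
  exact hemb.isClosedMap _ horth

lemma isClosed_coneK [FiniteDimensional ℝ E] (T : Finset E) : IsClosed (coneK T) := by
  classical
  have hunion : coneK T = ⋃ T' ∈ T.powerset.filter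
      (fun T' => LinearIndependent ℝ (fun z : {x // x ∈ T'} => (z : E))), coneK T' := by
    ext w
    simp only [Set.mem_iUnion, Finset.mem_filter, Finset.mem_powerset, exists_prop]
    constructor
    · intro hw
      obtain ⟨T', hsub, hli, hmem⟩ := coneK_carath T w hw
      exact ⟨T', ⟨hsub, hli⟩, hmem⟩
    · rintro ⟨T', ⟨hsub, _⟩, hmem⟩
      exact coneK_mono hsub hmem
  rw [hunion]
  exact isClosed_biUnion_finset fun T' hT' =>
    isClosed_coneK_of_li T' (Finset.mem_filter.1 hT').2

end Cone

section Dir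

variable {E : Type*} [NormedAddCommGroup E] [NormedSpace ℝ E]

/-- Two-sided feasible directions of a convex set `P` at `x`. -/
def dirSet (P : Set E) (x : E) : Set E :=
  {v | (∃ a : ℝ, 0 < a ∧ x + a • v ∈ P) ∧ (∃ b : ℝ, 0 < b ∧ x + b • (-v) ∈ P)}

lemma seg_mem {P : Set E} (hP : Convex ℝ P) {x : E} (hx : x ∈ P) {v : E} {a s : ℝ}
    (hav : x + a • v ∈ P) (h0 : 0 ≤ s) (hsa : s ≤ a) : x + s • v ∈ P := by
  rcases eq_or_lt_of_le h0 with rfl | hs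
  · simpa using hx
  · have ha : 0 < a := lt_of_lt_of_le hs hsa
    have key : x + s • v = (1 - s / a) • x + (s / a) • (x + a • v) := by
      rw [smul_add, smul_smul, div_mul_cancel₀ _ ha.ne']
      module
    rw [key]
    exact hP hx hav (by rw [sub_nonneg]; exact (div_le_one ha).2 hsa)
      (by positivity) (by ring)

lemma ray_add {P : Set E} (hP : Convex ℝ P) {x : E} (hx : x ∈ P) {v w : E}
    (hv : ∃ a : ℝ, 0 < a ∧ x + a • v ∈ P) (hw : ∃ a : ℝ, 0 < a ∧ x + a • w ∈ P) :
    ∃ a : ℝ, 0 < a ∧ x + a • (v + w) ∈ P := by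
  obtain ⟨a, ha, hav⟩ := hv
  obtain ⟨b, hb, hbw⟩ := hw
  have ht0 : (0:ℝ) < min a b / 2 := by positivity
  refine ⟨min a b / 2, ht0, ?_⟩
  have h2ta : 2 * (min a b / 2) ≤ a := by
    have := min_le_left a b; linarith
  have h2tb : 2 * (min a b / 2) ≤ b := by
    have := min_le_right a b; linarith
  have h1 : x + (2 * (min a b / 2)) • v ∈ P := seg_mem hP hx hav (by positivity) h2ta
  have h2 : x + (2 * (min a b / 2)) • w ∈ P := seg_mem hP hx hbw (by positivity) h2tb
  have key : x + (min a b / 2) • (v + w)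
      = (1/2 : ℝ) • (x + (2 * (min a b / 2)) • v) + (1/2 : ℝ) • (x + (2 * (min a b / 2)) • w) := by
    module
  rw [key]
  exact hP h1 h2 (by norm_num) (by norm_num) (by norm_num)

lemma ray_smul {P : Set E} {x : E} {v : E} {c : ℝ} (hc : 0 < c)
    (hv : ∃ a : ℝ, 0 < a ∧ x + a • v ∈ P) : ∃ a : ℝ, 0 < a ∧ x + a • (c • v) ∈ P := by
  obtain ⟨a, ha, hav⟩ := hv
  exact ⟨a / c, by positivity, by rwa [smul_smul, div_mul_cancel₀ _ hc.ne']⟩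

/-- `dirSet` as a submodule. -/
def dirSubmodule (P : Set E) (x : E) (hP : Convex ℝ P) (hx : x ∈ P) : Submodule ℝ E where
  carrier := dirSet P x
  zero_mem' := ⟨⟨1, one_pos, by simpa using hx⟩, ⟨1, one_pos, by simpa using hx⟩⟩
  add_mem' := by
    rintro v w ⟨hv1, hv2⟩ ⟨hw1, hw2⟩
    refine ⟨ray_add hP hx hv1 hw1, ?_⟩
    simp only [neg_add]
    exact ray_add hP hx hv2 hw2
  smul_mem' := by
    intro c v hv
    obtain ⟨hv1, hv2⟩ := hv
    rcases lt_trichotomy c 0 with hc | rfl | hc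
    · constructor
      · have := ray_smul (neg_pos.2 hc) hv2
        simpa [smul_neg, neg_smul] using this
      · have := ray_smul (neg_pos.2 hc) hv1
        simpa [smul_neg, neg_smul] using this
    · exact ⟨⟨1, one_pos, by simpa using hx⟩, ⟨1, one_pos, by simpa using hx⟩⟩
    · refine ⟨ray_smul hc hv1, ?_⟩
      have := ray_smul hc hv2
      simpa [smul_neg] using this

@[simp] lemma mem_dirSubmodule {P : Set E} {x : E} (hP : Convex ℝ P) (hx : x ∈ P) {v : E} :
    v ∈ dirSubmodule P x hP hx ↔ v ∈ dirSet P x := Iff.rfl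

end Dir

section Face

variable {E : Type*} [NormedAddCommGroup E] [NormedSpace ℝ E]

lemma face_helper {P : Set E} (hP : Convex ℝ P) {x u w : E}
    (hw : w ∈ P) {s a b : ℝ} (hs : 0 < s) (ha : 0 < a) (hb : 0 < b) (hab : a + b = 1)
    (hq : x + s • (x - (a • u + b • w)) ∈ P) :
    ∃ β : ℝ, 0 < β ∧ x + β • (x - u) ∈ P := by
  have h1 : (0:ℝ) < 1 + s * b := by positivity
  refine ⟨s * a / (1 + s * b), by positivity, ?_⟩
  have key : x + (s * a / (1 + s * b)) • (x - u)
      = (s * b / (1 + s * b)) • w + (1 / (1 + s * b)) • (x + s • (x - (a • u + b • w))) := by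
    have hb' : b = 1 - a := by linarith
    subst hb'
    match_scalars <;> field_simp <;> ring
  rw [key]
  exact hP hw hq (by positivity) (by positivity) (by field_simp <;> ring)

lemma Fx_convex {P : Set E} (hP : Convex ℝ P) {x : E} (hx : x ∈ P) :
    Convex ℝ {y ∈ P | ∃ b : ℝ, 0 < b ∧ x + b • (x - y) ∈ P} := by
  rintro y₁ ⟨hy₁, b₁, hb₁, h₁⟩ y₂ ⟨hy₂, b₂, hb₂, h₂⟩ p q hp hq hpq
  refine ⟨hP hy₁ hy₂ hp hq hpq, min b₁ b₂, lt_min hb₁ hb₂, ?_⟩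
  have e₁ : x + (min b₁ b₂) • (x - y₁) ∈ P :=
    seg_mem hP hx h₁ (le_of_lt (lt_min hb₁ hb₂)) (min_le_left _ _)
  have e₂ : x + (min b₁ b₂) • (x - y₂) ∈ P :=
    seg_mem hP hx h₂ (le_of_lt (lt_min hb₁ hb₂)) (min_le_right _ _)
  have hq' : q = 1 - p := by linarith
  subst hq'
  have key : x + (min b₁ b₂) • (x - (p • y₁ + (1 - p) • y₂))
      = p • (x + (min b₁ b₂) • (x - y₁)) + (1 - p) • (x + (min b₁ b₂) • (x - y₂)) := by
    module
  rw [key]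
  exact hP e₁ e₂ hp hq (by ring)

lemma Fx_isExtreme {P : Set E} (hP : Convex ℝ P) {x : E} :
    IsExtreme ℝ P {y ∈ P | ∃ b : ℝ, 0 < b ∧ x + b • (x - y) ∈ P} := by
  constructor
  · exact fun y hy => hy.1
  · rintro u hu w hw p ⟨hpP, s, hs, hq⟩ ⟨a, b, ha, hb, hab, hcomb⟩
    exact ⟨hu, face_helper hP hw hs ha hb hab (by rwa [hcomb])⟩

lemma Fx_subset_face {n : ℕ} {M F : Set (Fin n → ℝ)} (hF : IsFaceOf n M F) {x : Fin n → ℝ}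
    (hxF : x ∈ F) : {y ∈ M | ∃ b : ℝ, 0 < b ∧ x + b • (x - y) ∈ M} ⊆ F := by
  rintro y ⟨hyM, b, hb, hz⟩
  have h1 : (0:ℝ) < 1 + b := by positivity
  have hseg : x ∈ openSegment ℝ y (x + b • (x - y)) := by
    refine ⟨b / (1 + b), 1 / (1 + b), by positivity, by positivity, by field_simp <;> ring, ?_⟩
    match_scalars <;> field_simp <;> ring
  exact hF.2.2 hyM hz hxF hseg

lemma smallestFace_eq {n : ℕ} {M : Set (Fin n → ℝ)} (hM : Convex ℝ M) {x : Fin n → ℝ}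
    (hx : x ∈ M) :
    smallestFace n M x = {y ∈ M | ∃ b : ℝ, 0 < b ∧ x + b • (x - y) ∈ M} := by
  apply Set.Subset.antisymm
  · exact Set.sInter_subset_of_mem
      ⟨⟨Fx_convex hM hx, Fx_isExtreme hM⟩, hx, 1, one_pos, by simpa using hx⟩
  · exact Set.subset_sInter fun F hF => Fx_subset_face hF.1 hF.2

lemma mem_spanAt_iff {n : ℕ} {M : Set (Fin n → ℝ)} (hM : Convex ℝ M) {x : Fin n → ℝ}
    (hx : x ∈ M) {v : Fin n → ℝ} : v ∈ spanAt n M x ↔ v ∈ dirSet M x := by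
  have hspan : spanAt n M x = Submodule.span ℝ
      ((fun y => y - x) '' {y ∈ M | ∃ b : ℝ, 0 < b ∧ x + b • (x - y) ∈ M}) := by
    rw [spanAt, smallestFace_eq hM hx]
  constructor
  · intro hv
    rw [hspan] at hv
    have hle : Submodule.span ℝ
        ((fun y => y - x) '' {y ∈ M | ∃ b : ℝ, 0 < b ∧ x + b • (x - y) ∈ M})
        ≤ dirSubmodule M x hM hx := by
      rw [Submodule.span_le]
      rintro _ ⟨y, ⟨hyM, b, hb, hby⟩, rfl⟩
      refine ⟨⟨1, one_pos, by simpa using hyM⟩, ⟨b, hb, ?_⟩⟩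
      rw [neg_sub]
      exact hby
    exact hle hv
  · rintro ⟨⟨a, ha, hav⟩, ⟨b, hb, hbv⟩⟩
    rw [hspan]
    have hy : (x + a • v) ∈ {y ∈ M | ∃ b : ℝ, 0 < b ∧ x + b • (x - y) ∈ M} := by
      refine ⟨hav, b / a, by positivity, ?_⟩
      have hrw : x + (b/a) • (x - (x + a • v)) = x + b • (-v) := by
        match_scalars <;> field_simp <;> ring
      rw [hrw]
      exact hbv
    have hrv : v = a⁻¹ • ((x + a • v) - x) := by
      rw [add_sub_cancel_left, smul_smul, inv_mul_cancel₀ ha.ne', one_smul]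
    rw [hrv]
    exact Submodule.smul_mem _ _ (Submodule.subset_span ⟨x + a • v, hy, rfl⟩)

end Face

section Feasible

variable {E : Type*} [NormedAddCommGroup E] [NormedSpace ℝ E]

lemma feasible_eq_coneK [DecidableEq E] {S : Finset E} {y : E} (hy : y ∈ convexHull ℝ (S : Set E)) :
    {w : E | ∃ t : ℝ, 0 < t ∧ y + t • w ∈ convexHull ℝ (S : Set E)}
      = coneK (S.image fun s => s - y) := by
  classical
  have hinj : ∀ a ∈ S, ∀ b ∈ S, a - y = b - y → a = b := fun a _ b _ h => by
    simpa [sub_left_inj] using h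
  ext w
  constructor
  · rintro ⟨t, ht, hmem⟩
    rw [Finset.convexHull_eq] at hmem
    obtain ⟨lam, hlam0, hlam1, hcm⟩ := hmem
    rw [Finset.centerMass_eq_of_sum_1 _ _ hlam1] at hcm
    simp only [id] at hcm
    refine ⟨fun z => lam (z + y) / t, fun z hz => ?_, ?_⟩
    · obtain ⟨s, hs, rfl⟩ := Finset.mem_image.1 hz
      simp only [sub_add_cancel]
      exact div_nonneg (hlam0 s hs) ht.le
    · rw [Finset.sum_image hinj]
      have hstep : ∀ s ∈ S, (lam (s - y + y) / t) • (s - y) = t⁻¹ • (lam s • (s - y)) := by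
        intro s _
        rw [sub_add_cancel, smul_smul, div_eq_inv_mul]
      rw [Finset.sum_congr rfl hstep, ← Finset.smul_sum]
      have hsub : ∑ s ∈ S, lam s • (s - y) = (∑ s ∈ S, lam s • s) - (∑ s ∈ S, lam s) • y := by
        rw [Finset.sum_smul, ← Finset.sum_sub_distrib]
        exact Finset.sum_congr rfl fun s _ => by rw [smul_sub]
      rw [hsub, hlam1, one_smul, hcm]
      rw [add_sub_cancel_left, smul_smul, inv_mul_cancel₀ ht.ne', one_smul]
  · rintro ⟨c, hc, hsum⟩
    rw [Finset.sum_image hinj] at hsum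
    set σ := ∑ s ∈ S, c (s - y) with hσ
    have hσ0 : 0 ≤ σ := Finset.sum_nonneg fun s hs =>
      hc _ (Finset.mem_image_of_mem _ hs)
    rcases eq_or_lt_of_le hσ0 with h | h
    · have hzero : ∀ s ∈ S, c (s - y) = 0 := by
        intro s hs
        have := (Finset.sum_eq_zero_iff_of_nonneg
          (fun s hs => hc _ (Finset.mem_image_of_mem _ hs))).1 h.symm
        exact this s hs
      have hw0 : w = 0 := by
        rw [← hsum]
        exact Finset.sum_eq_zero fun s hs => by rw [hzero s hs, zero_smul]
      exact ⟨1, one_pos, by simpa [hw0] using hy⟩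
    · refine ⟨σ⁻¹, inv_pos.2 h, ?_⟩
      have hp : ∑ s ∈ S, (c (s - y) / σ) • s ∈ convexHull ℝ (S : Set E) := by
        apply (convex_convexHull ℝ (S : Set E)).sum_mem
          (fun s _ => div_nonneg (hc _ (Finset.mem_image_of_mem _ ‹_›)) hσ0)
        · rw [← Finset.sum_div, ← hσ, div_self h.ne']
        · exact fun s hs => subset_convexHull ℝ _ hs
      have hkey : y + σ⁻¹ • w = ∑ s ∈ S, (c (s - y) / σ) • s := by
        rw [← hsum, Finset.smul_sum]
        have hstep : ∀ s ∈ S, σ⁻¹ • (c (s - y) • (s - y)) = (c (s - y) / σ) • (s - y) := by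
          intro s _
          rw [smul_smul, div_eq_inv_mul]
        rw [Finset.sum_congr rfl hstep]
        have hsub : ∑ s ∈ S, (c (s - y) / σ) • (s - y)
            = (∑ s ∈ S, (c (s - y) / σ) • s) - (∑ s ∈ S, c (s - y) / σ) • y := by
          rw [Finset.sum_smul, ← Finset.sum_sub_distrib]
          exact Finset.sum_congr rfl fun s _ => by rw [smul_sub]
        rw [hsub, ← Finset.sum_div, ← hσ, div_self h.ne', one_smul]
        abel
      rw [hkey]
      exact hp

end Feasible

section KeyEstimate

set_option maxHeartbeats 1000000 in
/-- C¹-type estimate at (possibly boundary) points of a relatively open convex piece. -/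
lemma key_estimate {E F : Type*} [NormedAddCommGroup E] [NormedSpace ℝ E]
    [NormedAddCommGroup F] [NormedSpace ℝ F]
    {P O : Set E} (hP : Convex ℝ P) {z : E} (hz : z ∈ interior P) (hO : IsOpen O)
    {f : E → F} {f' : E → E →L[ℝ] F}
    (hf : ContinuousOn f (P ∩ O)) (hf' : ContinuousOn f' (P ∩ O))
    (hd : ∀ p ∈ interior (P ∩ O), HasFDerivAt f (f' p) p)
    {y : E} (hy : y ∈ P ∩ O) {δ : ℝ} (hδ : 0 < δ) :
    ∃ r > 0, ∀ k : E, ‖k‖ < r → y + k ∈ P → ‖f (y + k) - f y - f' y k‖ ≤ δ * ‖k‖ := by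
  obtain ⟨hyP, hyO⟩ := hy
  obtain ⟨r₁, hr₁0, hr₁⟩ := Metric.isOpen_iff.1 hO y hyO
  obtain ⟨r₂, hr₂0, hr₂⟩ := Metric.continuousWithinAt_iff.1 (hf' y ⟨hyP, hyO⟩) δ hδ
  have hR0 : 0 < min r₁ r₂ := lt_min hr₁0 hr₂0
  set R := min r₁ r₂ with hR
  refine ⟨R / 2, by positivity, ?_⟩
  intro k hk hkP
  have hkO : y + k ∈ O := by
    apply hr₁
    rw [Metric.mem_ball, dist_eq_norm, add_sub_cancel_left]
    have hRr : R ≤ r₁ := by rw [hR]; exact min_le_left r₁ r₂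
    linarith
  set ε₀ := min (R / (2 * (‖z - y‖ + 1))) 1 with hε₀
  have hε₀0 : 0 < ε₀ := lt_min (by positivity) one_pos
  -- basic membership facts along the shifted segments
  have hfacts : ∀ ε ∈ Set.Ioc (0:ℝ) ε₀, ∀ β : ℝ, 0 ≤ β → β ≤ 1 →
      ((1 - ε) • (y + β • k) + ε • z ∈ interior (P ∩ O)) ∧
      dist (f' ((1 - ε) • (y + β • k) + ε • z)) (f' y) < δ := by
    rintro ε ⟨hε0, hεε₀⟩ β hβ0 hβ1
    have hε1 : ε ≤ 1 := le_trans hεε₀ (min_le_right _ _)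
    have hyk : y + β • k ∈ P := by
      have h1k : y + (1:ℝ) • k ∈ P := by rwa [one_smul]
      exact seg_mem hP hyP h1k hβ0 hβ1
    have hintP : (1 - ε) • (y + β • k) + ε • z ∈ interior P := by
      rw [add_comm]
      exact hP.combo_interior_self_mem_interior hz hyk hε0 (by linarith) (by ring)
    have hnorm : ‖((1 - ε) • (y + β • k) + ε • z) - y‖ < R := by
      have hrw : ((1 - ε) • (y + β • k) + ε • z) - y = ((1 - ε) * β) • k + ε • (z - y) := by
        module
      rw [hrw]
      have h1 : ‖((1 - ε) * β) • k‖ ≤ ‖k‖ := by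
        rw [norm_smul, Real.norm_eq_abs, abs_of_nonneg (by nlinarith)]
        have hle1 : (1 - ε) * β ≤ 1 := by nlinarith
        have := mul_le_mul_of_nonneg_right hle1 (norm_nonneg k)
        linarith
      have h2 : ‖ε • (z - y)‖ ≤ R / 2 := by
        rw [norm_smul, Real.norm_eq_abs, abs_of_nonneg hε0.le]
        have hεle : ε ≤ R / (2 * (‖z - y‖ + 1)) := le_trans hεε₀ (min_le_left _ _)
        have hmul : ε * ‖z - y‖ ≤ R / (2 * (‖z - y‖ + 1)) * ‖z - y‖ :=
          mul_le_mul_of_nonneg_right hεle (norm_nonneg _)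
        have h3 : R / (2 * (‖z - y‖ + 1)) * ‖z - y‖ ≤ R / 2 := by
          rw [div_mul_eq_mul_div, div_le_div_iff₀ (by positivity) (by norm_num)]
          nlinarith [norm_nonneg (z - y)]
        linarith
      calc ‖((1 - ε) * β) • k + ε • (z - y)‖
          ≤ ‖((1 - ε) * β) • k‖ + ‖ε • (z - y)‖ := norm_add_le _ _
        _ < R := by linarith
    have hO' : (1 - ε) • (y + β • k) + ε • z ∈ O := by
      apply hr₁
      rw [Metric.mem_ball, dist_eq_norm]
      exact lt_of_lt_of_le hnorm (min_le_left _ _)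
    refine ⟨?_, ?_⟩
    · rw [interior_inter, hO.interior_eq]
      exact ⟨hintP, hO'⟩
    · refine hr₂ ⟨interior_subset hintP, hO'⟩ ?_
      rw [dist_eq_norm]
      exact lt_of_lt_of_le hnorm (min_le_right _ _)
  set p₀ : ℝ → E := fun ε => (1 - ε) • y + ε • z with hp₀
  set p₁ : ℝ → E := fun ε => (1 - ε) • (y + k) + ε • z with hp₁
  have main : ∀ ε ∈ Set.Ioc (0:ℝ) ε₀,
      ‖f (p₁ ε) - f (p₀ ε) - (1 - ε) • (f' y) k‖ ≤ δ * ‖k‖ := by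
    intro ε hε
    obtain ⟨hε0, hεε₀⟩ := hε
    have hsegfacts : ∀ u ∈ segment ℝ (p₀ ε) (p₁ ε),
        HasFDerivWithinAt (fun u => f u - f' y u) (f' u - f' y) (segment ℝ (p₀ ε) (p₁ ε)) u ∧
        ‖f' u - f' y‖ ≤ δ := by
      rintro u ⟨α, β, hα, hβ, hαβ, rfl⟩
      have hα' : α = 1 - β := by linarith
      subst hα'
      have hrep : (1 - β) • p₀ ε + β • p₁ ε = (1 - ε) • (y + β • k) + ε • z := by
        simp only [hp₀, hp₁]
        module
      rw [hrep]
      obtain ⟨hint, hdist⟩ := hfacts ε ⟨hε0, hεε₀⟩ β hβ (by linarith)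
      constructor
      · exact ((hd _ hint).sub ((f' y).hasFDerivAt)).hasFDerivWithinAt
      · rw [← dist_eq_norm]
        exact hdist.le
    have hmvt := Convex.norm_image_sub_le_of_norm_hasFDerivWithin_le
      (fun u hu => (hsegfacts u hu).1) (fun u hu => (hsegfacts u hu).2)
      (convex_segment (p₀ ε) (p₁ ε)) (left_mem_segment ℝ _ _) (right_mem_segment ℝ _ _)
    have hdiff : p₁ ε - p₀ ε = (1 - ε) • k := by
      simp only [hp₀, hp₁]
      module
    have hrw2 : (f (p₁ ε) - f' y (p₁ ε)) - (f (p₀ ε) - f' y (p₀ ε))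
        = f (p₁ ε) - f (p₀ ε) - (1 - ε) • (f' y) k := by
      have hl : f' y (p₁ ε) - f' y (p₀ ε) = (1 - ε) • (f' y) k := by
        rw [← map_sub, hdiff, map_smul]
      rw [← hl]
      abel
    rw [hrw2] at hmvt
    have hε1 : ε ≤ 1 := le_trans hεε₀ (min_le_right _ _)
    calc ‖f (p₁ ε) - f (p₀ ε) - (1 - ε) • (f' y) k‖
        ≤ δ * ‖p₁ ε - p₀ ε‖ := hmvt
      _ ≤ δ * ‖k‖ := by
          rw [hdiff, norm_smul, Real.norm_eq_abs, abs_of_nonneg (by linarith)]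
          have hle1 : (1 - ε) * ‖k‖ ≤ 1 * ‖k‖ :=
            mul_le_mul_of_nonneg_right (by linarith) (norm_nonneg k)
          rw [one_mul] at hle1
          exact mul_le_mul_of_nonneg_left hle1 hδ.le
  -- pass to the limit ε → 0⁺
  have hIoc : Set.Ioc (0:ℝ) ε₀ ∈ nhdsWithin (0:ℝ) (Set.Ioi 0) :=
    Ioc_mem_nhdsGT_of_mem ⟨le_refl 0, hε₀0⟩
  have hmemPO : ∀ ε ∈ Set.Ioc (0:ℝ) ε₀, p₀ ε ∈ P ∩ O ∧ p₁ ε ∈ P ∩ O := by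
    intro ε hε
    have h0 := (hfacts ε hε 0 (le_refl 0) zero_le_one).1
    have h1 := (hfacts ε hε 1 zero_le_one (le_refl 1)).1
    constructor
    · have : (1 - ε) • (y + (0:ℝ) • k) + ε • z = p₀ ε := by
        simp only [hp₀, zero_smul, add_zero]
      rw [this] at h0
      exact interior_subset h0
    · have : (1 - ε) • (y + (1:ℝ) • k) + ε • z = p₁ ε := by
        simp only [hp₁, one_smul]
      rw [this] at h1
      exact interior_subset h1
  have hcp₀ : Filter.Tendsto p₀ (nhdsWithin (0:ℝ) (Set.Ioi 0)) (nhdsWithin y (P ∩ O)) := by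
    rw [tendsto_nhdsWithin_iff]
    constructor
    · have hcont0 : Continuous p₀ := by
        simp only [hp₀]
        exact ((continuous_const.sub continuous_id).smul continuous_const).add
          (continuous_id.smul continuous_const)
      have := hcont0.tendsto 0
      simp only [hp₀, sub_zero, one_smul, zero_smul, add_zero] at this
      exact this.mono_left nhdsWithin_le_nhds
    · filter_upwards [hIoc] with ε hε
      exact (hmemPO ε hε).1
  have hcp₁ : Filter.Tendsto p₁ (nhdsWithin (0:ℝ) (Set.Ioi 0)) (nhdsWithin (y + k) (P ∩ O)) := by
    rw [tendsto_nhdsWithin_iff]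
    constructor
    · have hcont1 : Continuous p₁ := by
        simp only [hp₁]
        exact ((continuous_const.sub continuous_id).smul continuous_const).add
          (continuous_id.smul continuous_const)
      have := hcont1.tendsto 0
      simp only [hp₁, sub_zero, one_smul, zero_smul, add_zero] at this
      exact this.mono_left nhdsWithin_le_nhds
    · filter_upwards [hIoc] with ε hε
      exact (hmemPO ε hε).2
  have hT1 : Filter.Tendsto (fun ε : ℝ => f (p₁ ε)) (nhdsWithin (0:ℝ) (Set.Ioi 0))
      (nhds (f (y + k))) := (hf (y + k) ⟨hkP, hkO⟩).tendsto.comp hcp₁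
  have hT0 : Filter.Tendsto (fun ε : ℝ => f (p₀ ε)) (nhdsWithin (0:ℝ) (Set.Ioi 0))
      (nhds (f y)) := (hf y ⟨hyP, hyO⟩).tendsto.comp hcp₀
  have hT2 : Filter.Tendsto (fun ε : ℝ => (1 - ε) • (f' y) k) (nhdsWithin (0:ℝ) (Set.Ioi 0))
      (nhds ((f' y) k)) := by
    have hcont2 : Continuous fun ε : ℝ => (1 - ε) • (f' y) k :=
      (continuous_const.sub continuous_id).smul continuous_const
    have := hcont2.tendsto 0
    simp only [sub_zero, one_smul] at this
    exact this.mono_left nhdsWithin_le_nhds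
  have hTall := ((hT1.sub hT0).sub hT2).norm
  refine le_of_tendsto hTall ?_
  filter_upwards [hIoc] with ε hε
  exact main ε hε

end KeyEstimate

section StepTD

set_option maxHeartbeats 2000000 in
/-- Main analytic step: the derivative maps two-sided feasible directions to two-sided
feasible directions, and the "inverse derivative" inverts it on these directions. -/
lemma stepTD {n : ℕ} {M N O O' : Set (Fin n → ℝ)}
    (hMc : Convex ℝ M) (hMi : (interior M).Nonempty)
    (hN : IsPolytope n N) (hNc : Convex ℝ N) (hNi : (interior N).Nonempty)
    (hO : IsOpen O) (hO' : IsOpen O')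
    {φ ψ : (Fin n → ℝ) → (Fin n → ℝ)} {φ' ψ' : (Fin n → ℝ) → ((Fin n → ℝ) →L[ℝ] (Fin n → ℝ))}
    (hmaps : Set.MapsTo φ (M ∩ O) (N ∩ O'))
    (hcont : ContinuousOn φ (M ∩ O)) (hcont' : ContinuousOn φ' (M ∩ O))
    (hderiv : ∀ x ∈ interior (M ∩ O), HasFDerivAt φ (φ' x) x)
    (hcontinv : ContinuousOn ψ (N ∩ O')) (hcontinv' : ContinuousOn ψ' (N ∩ O'))
    (hderivinv : ∀ y ∈ interior (N ∩ O'), HasFDerivAt ψ (ψ' y) y)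
    (hinvl : ∀ u ∈ M ∩ O, ψ (φ u) = u) :
    ∀ x ∈ M ∩ O, ∀ v ∈ dirSet M x,
      φ' x v ∈ dirSet N (φ x) ∧ ψ' (φ x) (φ' x v) = v := by
  obtain ⟨S, hS⟩ := hN
  obtain ⟨z, hzM⟩ := hMi
  obtain ⟨z', hz'N⟩ := hNi
  intro x hxU v hv
  obtain ⟨hxM, hxO⟩ := hxU
  have hyV : φ x ∈ N ∩ O' := hmaps ⟨hxM, hxO⟩
  obtain ⟨hyN, hyO'⟩ := hyV
  -- the feasible cone of N at φ x is closed
  have hC : IsClosed {p : Fin n → ℝ | ∃ t : ℝ, 0 < t ∧ φ x + t • p ∈ N} := by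
    have hCrw : {p : Fin n → ℝ | ∃ t : ℝ, 0 < t ∧ φ x + t • p ∈ N}
        = coneK (S.image fun s => s - φ x) := by
      rw [hS]
      exact feasible_eq_coneK (by rw [← hS]; exact hyN)
    rw [hCrw]
    exact isClosed_coneK _
  -- one-sided claim
  have oneside : ∀ u : Fin n → ℝ, (∃ a : ℝ, 0 < a ∧ x + a • u ∈ M) →
      (∃ t : ℝ, 0 < t ∧ φ x + t • (φ' x u) ∈ N) ∧ ψ' (φ x) (φ' x u) = u := by
    rintro u ⟨a, ha, hau⟩
    obtain ⟨rO, hrO0, hrO⟩ := Metric.isOpen_iff.1 hO x hxO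
    set s₀ := min a (rO / (‖u‖ + 1)) with hs₀
    have hs₀0 : 0 < s₀ := lt_min ha (by positivity)
    have hsU : ∀ s : ℝ, 0 < s → s ≤ s₀ → x + s • u ∈ M ∩ O := by
      intro s hs hss
      refine ⟨seg_mem hMc hxM hau hs.le (le_trans hss (min_le_left _ _)), hrO ?_⟩
      rw [Metric.mem_ball, dist_eq_norm, add_sub_cancel_left, norm_smul, Real.norm_eq_abs,
        abs_of_pos hs]
      have h1 : s ≤ rO / (‖u‖ + 1) := le_trans hss (min_le_right _ _)
      have h1' : s * (‖u‖ + 1) ≤ rO := (le_div_iff₀ (by positivity)).1 h1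
      nlinarith [norm_nonneg u]
    -- quantitative approximation of the derivative by chords
    have happrox : ∀ δ : ℝ, 0 < δ → ∀ σ : ℝ, 0 < σ → ∃ s : ℝ, 0 < s ∧ s ≤ s₀ ∧ s ≤ σ ∧
        ‖(s⁻¹ • (φ (x + s • u) - φ x)) - φ' x u‖ ≤ δ * ‖u‖ ∧ (x + s • u ∈ M ∩ O) := by
      intro δ hδ σ hσ
      obtain ⟨r, hr0, hest⟩ := key_estimate hMc hzM hO hcont hcont' hderiv ⟨hxM, hxO⟩ hδ
      set s := min (min s₀ σ) (r / (2 * (‖u‖ + 1))) with hs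
      have hs0 : 0 < s := lt_min (lt_min hs₀0 hσ) (by positivity)
      have hsles₀ : s ≤ s₀ := le_trans (min_le_left _ _) (min_le_left _ _)
      have hslesσ : s ≤ σ := le_trans (min_le_left _ _) (min_le_right _ _)
      have hkr : ‖s • u‖ < r := by
        rw [norm_smul, Real.norm_eq_abs, abs_of_pos hs0]
        have h1 : s ≤ r / (2 * (‖u‖ + 1)) := min_le_right _ _
        have h1' : s * (2 * (‖u‖ + 1)) ≤ r := (le_div_iff₀ (by positivity)).1 h1
        nlinarith [norm_nonneg u]
      have hmem : x + s • u ∈ M :=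
        seg_mem hMc hxM hau hs0.le (le_trans hsles₀ (min_le_left _ _))
      have hkey := hest (s • u) hkr hmem
      refine ⟨s, hs0, hsles₀, hslesσ, ?_, hsU s hs0 hsles₀⟩
      have hms : (φ' x) (s • u) = s • (φ' x u) := by rw [map_smul]
      have hexp : (s⁻¹ • (φ (x + s • u) - φ x)) - φ' x u
          = s⁻¹ • (φ (x + s • u) - φ x - (φ' x) (s • u)) := by
        have hsne : s ≠ 0 := hs0.ne'
        rw [hms]
        match_scalars <;> field_simp
      rw [hexp, norm_smul, Real.norm_eq_abs, abs_of_pos (inv_pos.2 hs0)]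
      calc s⁻¹ * ‖φ (x + s • u) - φ x - (φ' x) (s • u)‖
          ≤ s⁻¹ * (δ * ‖s • u‖) := mul_le_mul_of_nonneg_left hkey (inv_pos.2 hs0).le
        _ = δ * ‖u‖ := by
            rw [norm_smul, Real.norm_eq_abs, abs_of_pos hs0]
            field_simp
    constructor
    · -- membership in the (closed) feasible cone of N at φ x
      have hwC : φ' x u ∈ closure {p : Fin n → ℝ | ∃ t : ℝ, 0 < t ∧ φ x + t • p ∈ N} := by
        rw [Metric.mem_closure_iff]
        intro ε hε
        obtain ⟨s, hs0, hsle, -, hclose, hsU'⟩ := happrox (ε / (2 * (‖u‖ + 1)))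
          (by positivity) 1 one_pos
        refine ⟨s⁻¹ • (φ (x + s • u) - φ x), ⟨s, hs0, ?_⟩, ?_⟩
        · rw [smul_inv_smul₀ hs0.ne']
          have hφm := (hmaps hsU').1
          have hrw : φ x + (φ (x + s • u) - φ x) = φ (x + s • u) := by abel
          rw [hrw]
          exact hφm
        · rw [dist_eq_norm, norm_sub_rev]
          calc ‖(s⁻¹ • (φ (x + s • u) - φ x)) - φ' x u‖
              ≤ ε / (2 * (‖u‖ + 1)) * ‖u‖ := hclose
            _ < ε := by
                rw [div_mul_eq_mul_div, div_lt_iff₀ (by positivity)]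
                nlinarith [norm_nonneg u]
      rw [hC.closure_eq] at hwC
      exact hwC
    · -- the inverse derivative identity
      have hbound : ∀ ε : ℝ, 0 < ε → ‖ψ' (φ x) (φ' x u) - u‖ ≤ ε := by
        intro ε hε
        set Cψ := ‖ψ' (φ x)‖ with hCψ
        have hCψ0 : 0 ≤ Cψ := norm_nonneg _
        set B := ‖φ' x u‖ + ‖u‖ + 1 with hB
        have hB0 : 0 < B := by positivity
        obtain ⟨r₂, hr₂0, hest₂⟩ := key_estimate hNc hz'N hO' hcontinv hcontinv' hderivinv
          ⟨hyN, hyO'⟩ (δ := ε / (2 * (B + 1))) (by positivity)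
        obtain ⟨s, hs0, hsle, hsleσ, hclose, hsU'⟩ := happrox
          (min 1 (ε / (2 * (Cψ + 1) * (‖u‖ + 1)))) (lt_min one_pos (by positivity))
          (r₂ / (2 * (B + 1))) (by positivity)
        set p := s⁻¹ • (φ (x + s • u) - φ x) with hp
        have hdp : ‖p - φ' x u‖ ≤ min 1 (ε / (2 * (Cψ + 1) * (‖u‖ + 1))) * ‖u‖ := hclose
        have hdp1 : ‖p - φ' x u‖ ≤ ‖u‖ := by
          have h1 : min 1 (ε / (2 * (Cψ + 1) * (‖u‖ + 1))) * ‖u‖ ≤ 1 * ‖u‖ :=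
            mul_le_mul_of_nonneg_right (min_le_left _ _) (norm_nonneg _)
          rw [one_mul] at h1
          linarith
        have hpB : ‖p‖ ≤ B := by
          have := norm_le_norm_add_norm_sub' p (φ' x u)
          calc ‖p‖ ≤ ‖φ' x u‖ + ‖p - φ' x u‖ := by
                have h := norm_sub_norm_le p (φ' x u)
                have h2 : ‖p‖ - ‖φ' x u‖ ≤ ‖p - φ' x u‖ := h
                linarith
            _ ≤ ‖φ' x u‖ + ‖u‖ := by linarith
            _ ≤ B := by rw [hB]; linarith
        set k := φ (x + s • u) - φ x with hk
        have hkp : k = s • p := by rw [hp, smul_inv_smul₀ hs0.ne']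
        have hknorm : ‖k‖ < r₂ := by
          rw [hkp, norm_smul, Real.norm_eq_abs, abs_of_pos hs0]
          have h1 : s * B ≤ (r₂ / (2 * (B + 1))) * B :=
            mul_le_mul_of_nonneg_right hsleσ hB0.le
          have h2 : (r₂ / (2 * (B + 1))) * B < r₂ := by
            rw [div_mul_eq_mul_div, div_lt_iff₀ (by positivity)]
            nlinarith
          have h3 : s * ‖p‖ ≤ s * B := mul_le_mul_of_nonneg_left hpB hs0.le
          exact lt_of_le_of_lt (le_trans h3 h1) h2
        have hkN : φ x + k ∈ N := by
          have hrw : φ x + k = φ (x + s • u) := by rw [hk]; abel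
          rw [hrw]
          exact (hmaps hsU').1
        have h2 := hest₂ k hknorm hkN
        have hψ1 : ψ (φ x + k) = x + s • u := by
          have hrw : φ x + k = φ (x + s • u) := by rw [hk]; abel
          rw [hrw]
          exact hinvl _ hsU'
        have hψ2 : ψ (φ x) = x := hinvl x ⟨hxM, hxO⟩
        rw [hψ1, hψ2, hkp, map_smul] at h2
        have hlhs : x + s • u - x - s • (ψ' (φ x)) p = s • (u - ψ' (φ x) p) := by
          rw [smul_sub]; abel
        rw [hlhs, norm_smul, Real.norm_eq_abs, abs_of_pos hs0] at h2
        have hknorm2 : ‖s • p‖ = s * ‖p‖ := by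
          rw [norm_smul, Real.norm_eq_abs, abs_of_pos hs0]
        rw [hknorm2] at h2
        have h2' : ‖u - ψ' (φ x) p‖ ≤ ε / (2 * (B + 1)) * ‖p‖ := by
          have := mul_le_mul_of_nonneg_left h2 (inv_pos.2 hs0).le
          rw [← mul_assoc, inv_mul_cancel₀ hs0.ne', one_mul] at this
          calc ‖u - ψ' (φ x) p‖ = s⁻¹ * (s * ‖u - ψ' (φ x) p‖) := by
                field_simp
            _ ≤ s⁻¹ * (ε / (2 * (B + 1)) * (s * ‖p‖)) :=
                mul_le_mul_of_nonneg_left h2 (inv_pos.2 hs0).le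
            _ = ε / (2 * (B + 1)) * ‖p‖ := by field_simp
        have hfirst : ‖u - ψ' (φ x) p‖ ≤ ε / 2 := by
          have hc1 : ε / (2 * (B + 1)) * ‖p‖ ≤ ε / (2 * (B + 1)) * B :=
            mul_le_mul_of_nonneg_left hpB (by positivity)
          have hc2 : ε / (2 * (B + 1)) * B ≤ ε / 2 := by
            rw [div_mul_eq_mul_div, div_le_div_iff₀ (by positivity) (by norm_num)]
            nlinarith
          linarith
        have hsecond : ‖ψ' (φ x) (φ' x u) - ψ' (φ x) p‖ ≤ ε / 2 := by
          have hop : ‖ψ' (φ x) (φ' x u - p)‖ ≤ Cψ * ‖φ' x u - p‖ :=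
            (ψ' (φ x)).le_opNorm _
          rw [map_sub] at hop
          have hd2 : ‖φ' x u - p‖ ≤ ε / (2 * (Cψ + 1) * (‖u‖ + 1)) * ‖u‖ := by
            rw [norm_sub_rev]
            calc ‖p - φ' x u‖ ≤ min 1 (ε / (2 * (Cψ + 1) * (‖u‖ + 1))) * ‖u‖ := hclose
              _ ≤ ε / (2 * (Cψ + 1) * (‖u‖ + 1)) * ‖u‖ :=
                  mul_le_mul_of_nonneg_right (min_le_right _ _) (norm_nonneg _)
          have hc3 : Cψ * ‖φ' x u - p‖ ≤ Cψ * (ε / (2 * (Cψ + 1) * (‖u‖ + 1)) * ‖u‖) :=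
            mul_le_mul_of_nonneg_left hd2 hCψ0
          have hc4 : Cψ * (ε / (2 * (Cψ + 1) * (‖u‖ + 1)) * ‖u‖) ≤ ε / 2 := by
            rw [div_mul_eq_mul_div, ← mul_div_assoc, div_le_div_iff₀ (by positivity) (by norm_num)]
            nlinarith [mul_nonneg (mul_nonneg hε.le hCψ0) (norm_nonneg u),
              mul_nonneg hε.le (norm_nonneg u), mul_nonneg hε.le hCψ0, hε.le, norm_nonneg u, hCψ0]
          linarith
        calc ‖ψ' (φ x) (φ' x u) - u‖
            ≤ ‖ψ' (φ x) (φ' x u) - ψ' (φ x) p‖ + ‖ψ' (φ x) p - u‖ := norm_sub_le_norm_sub_add_norm_sub _ _ _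
          _ ≤ ε / 2 + ε / 2 := by
              have := hfirst
              rw [norm_sub_rev] at this
              linarith [hsecond, this]
          _ = ε := by ring
      have : ‖ψ' (φ x) (φ' x u) - u‖ ≤ 0 := by
        refine le_of_forall_pos_le_add ?_
        intro ε hε
        simpa using hbound ε hε
      have h0 : ψ' (φ x) (φ' x u) - u = 0 :=
        norm_le_zero_iff.1 this
      exact sub_eq_zero.1 h0
  obtain ⟨hv1, hv2⟩ := hv
  refine ⟨⟨(oneside v ⟨hv1.choose, hv1.choose_spec.1, hv1.choose_spec.2⟩).1, ?_⟩,
    (oneside v hv1).2⟩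
  have := (oneside (-v) hv2).1
  simpa only [map_neg] using this

end StepTD

/-- Let `M, N ⊆ ℝⁿ` be convex polytopes with nonempty interior and
`φ : U → V` a `C¹`-diffeomorphism between relatively open subsets `U ⊆ M`, `V ⊆ N`.
Then `φ'(x)(E(x)) = F(φ(x))` for each `x ∈ U`; in particular
`dim E(x) = dim F(φ(x))`. -/
theorem diffeomorphism_maps_face_span_onto_face_span {n : ℕ}
    (M N U V : Set (Fin n → ℝ))
    (hM : IsPolytope n M) (hMi : (interior M).Nonempty)
    (hN : IsPolytope n N) (hNi : (interior N).Nonempty)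
    (hU : ∃ O : Set (Fin n → ℝ), IsOpen O ∧ U = M ∩ O)
    (hV : ∃ O : Set (Fin n → ℝ), IsOpen O ∧ V = N ∩ O)
    (φ ψ : (Fin n → ℝ) → (Fin n → ℝ))
    (φ' ψ' : (Fin n → ℝ) → ((Fin n → ℝ) →L[ℝ] (Fin n → ℝ)))
    (hbij : Set.BijOn φ U V) (hinv : Set.InvOn ψ φ U V)
    (hcont : ContinuousOn φ U) (hcont' : ContinuousOn φ' U)
    (hderiv : ∀ x ∈ interior U, HasFDerivAt φ (φ' x) x)
    (hcontinv : ContinuousOn ψ V) (hcontinv' : ContinuousOn ψ' V)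
    (hderivinv : ∀ y ∈ interior V, HasFDerivAt ψ (ψ' y) y) :
    ∀ x ∈ U, (spanAt n M x).map (φ' x : (Fin n → ℝ) →ₗ[ℝ] (Fin n → ℝ)) = spanAt n N (φ x) ∧
      Module.finrank ℝ (spanAt n M x) = Module.finrank ℝ (spanAt n N (φ x)) := by
  obtain ⟨O, hO, hUe⟩ := hU
  obtain ⟨O', hO', hVe⟩ := hV
  subst hUe
  subst hVe
  have hMc : Convex ℝ M := by
    obtain ⟨S, hS⟩ := hM
    rw [hS]; exact convex_convexHull ℝ _
  have hNc : Convex ℝ N := by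
    obtain ⟨S, hS⟩ := hN
    rw [hS]; exact convex_convexHull ℝ _
  intro x hxU
  have hxM : x ∈ M := hxU.1
  have hyV : φ x ∈ N ∩ O' := hbij.mapsTo hxU
  have hyN : φ x ∈ N := hyV.1
  have hmapsψ : Set.MapsTo ψ (N ∩ O') (M ∩ O) := by
    intro yy hyy
    obtain ⟨xx, hxx, rfl⟩ := hbij.surjOn hyy
    rw [hinv.1 hxx]
    exact hxx
  have hT1 := stepTD hMc hMi hN hNc hNi hO hO' hbij.mapsTo hcont hcont' hderiv
    hcontinv hcontinv' hderivinv (fun u hu => hinv.1 hu) x hxU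
  have hT2 := stepTD hNc hNi hM hMc hMi hO' hO hmapsψ hcontinv hcontinv' hderivinv
    hcont hcont' hderiv (fun yy hyy => hinv.2 hyy) (φ x) hyV
  have hpsix : ψ (φ x) = x := hinv.1 hxU
  rw [hpsix] at hT2
  have hmapeq : (spanAt n M x).map (φ' x : (Fin n → ℝ) →ₗ[ℝ] (Fin n → ℝ)) = spanAt n N (φ x) := by
    apply le_antisymm
    · rw [Submodule.map_le_iff_le_comap]
      intro v hv
      have hv' : v ∈ dirSet M x := (mem_spanAt_iff hMc hxM).1 hv
      exact (mem_spanAt_iff hNc hyN).2 (hT1 v hv').1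
    · intro wv hwv
      have hw' : wv ∈ dirSet N (φ x) := (mem_spanAt_iff hNc hyN).1 hwv
      have h2 := hT2 wv hw'
      exact Submodule.mem_map.2 ⟨ψ' (φ x) wv, (mem_spanAt_iff hMc hxM).2 h2.1, h2.2⟩
  refine ⟨hmapeq, ?_⟩
  have h1 : Module.finrank ℝ (spanAt n N (φ x)) ≤ Module.finrank ℝ (spanAt n M x) := by
    rw [← hmapeq]
    exact Submodule.finrank_map_le _ _
  have hle2 : spanAt n M x ≤ (spanAt n N (φ x)).map (ψ' (φ x) : (Fin n → ℝ) →ₗ[ℝ] (Fin n → ℝ)) := by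
    intro v hv
    have hv' := (mem_spanAt_iff hMc hxM).1 hv
    have ht := hT1 v hv'
    exact Submodule.mem_map.2 ⟨φ' x v, (mem_spanAt_iff hNc hyN).2 ht.1, ht.2⟩
  have h2 : Module.finrank ℝ (spanAt n M x) ≤ Module.finrank ℝ (spanAt n N (φ x)) :=
    le_trans (Submodule.finrank_mono hle2) (Submodule.finrank_map_le _ _)
  exact le_antisymm h2 h1
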